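/- arXiv:1208.2164 — 2 statements merged into one kernel-verified Lean document; each statement's English description precedes it below -/
import Mathlib

section
/- Let D be a balanced bipartite digraph with colour classes X, Y of cardinality a ≥ 2 satisfying condition (M), and suppose D contains a complete matching M from X to Y and no cycle of length 2a. Fix distinct y' ∈ Y and x'' ∈ X, and let S be the set of vertices in Y \ {y'} reachable from y' along an M-compatible path of positive length. If D contains no M-compatible path from y' to x'', then (a−1)/2 ≤ |S| ≤ (a−2)/2, a contradiction; in particular such S cannot exist, i.e., D always contains an M-compatible path from y' to x''. -/
namespace BipDigraph

variable {V : Type}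

/-- Out-degree of `v` in the digraph `(V, A)`. -/
noncomputable def outdeg (A : V → V → Prop) (v : V) : ℕ := Nat.card {w : V // A v w}

/-- In-degree of `v` in the digraph `(V, A)`. -/
noncomputable def indeg (A : V → V → Prop) (v : V) : ℕ := Nat.card {w : V // A w v}

/-- Degree of `v`: out-degree plus in-degree. -/
noncomputable def deg (A : V → V → Prop) (v : V) : ℕ := outdeg A v + indeg A v

/-- Out-degree of `v` relative to the vertex set `S`. -/
noncomputable def outdegIn (A : V → V → Prop) (S : Set V) (v : V) : ℕ := Nat.card {w : V // w ∈ S ∧ A v w}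

/-- In-degree of `v` relative to the vertex set `S`. -/
noncomputable def indegIn (A : V → V → Prop) (S : Set V) (v : V) : ℕ := Nat.card {w : V // w ∈ S ∧ A w v}

/-- Degree of `v` relative to the vertex set `S`. -/
noncomputable def degIn (A : V → V → Prop) (S : Set V) (v : V) : ℕ := outdegIn A S v + indegIn A S v

/-- The arc `(u,v)` belongs to the matching given by the function `M` on the class `X`. -/
def InM (X : Finset V) (M : V → V) (u v : V) : Prop := u ∈ X ∧ M u = v

/-- The arc `(u,v)` is an arc of the digraph not belonging to the matching. -/
def NotM (A : V → V → Prop) (X : Finset V) (M : V → V) (u v : V) : Prop :=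
  A u v ∧ ¬ InM X M u v

/-- `M` is a complete matching from `X` to `Y`: every `x ∈ X` is matched along an arc
to a vertex of `Y`, and the matching arcs are independent. -/
def CompleteMatching (A : V → V → Prop) (X Y : Finset V) (M : V → V) : Prop :=
  (∀ x ∈ X, M x ∈ Y ∧ A x (M x)) ∧ Set.InjOn M X

/-- Consecutive arcs of the list alternately satisfy `P` and `Q`, starting with `P`. -/
def Alt (P Q : V → V → Prop) : List V → Prop
  | [] => True
  | [_] => True
  | a :: b :: t => P a b ∧ Alt Q P (b :: t)

/-- `p` is an oriented path in `(V, A)` whose arcs are alternately in the matching `M`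
(on `X`) and outside of it. -/
def IsCompatPath (A : V → V → Prop) (X : Finset V) (M : V → V) (p : List V) : Prop :=
  p ≠ [] ∧ p.Nodup ∧ p.Chain' A ∧
    (Alt (InM X M) (NotM A X M) p ∨ Alt (NotM A X M) (InM X M) p)

/-- An `M`-compatible oriented path from `u` to `v`. -/
def IsCompatPathFromTo (A : V → V → Prop) (X : Finset V) (M : V → V)
    (p : List V) (u v : V) : Prop :=
  IsCompatPath A X M p ∧ p.head? = some u ∧ p.getLast? = some v

/-- `p` lists the vertices of an oriented cycle of `(V, A)` in cyclic order;
its length (number of arcs = number of vertices) is `p.length`. -/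
def IsCycle (A : V → V → Prop) (p : List V) : Prop :=
  2 ≤ p.length ∧ p.Nodup ∧ ∃ u, p.head? = some u ∧ List.Chain' A (p ++ [u])

/-- `p` is an oriented cycle whose arcs are alternately in the matching `M` (on `X`)
and outside of it. -/
def IsCompatCycle (A : V → V → Prop) (X : Finset V) (M : V → V) (p : List V) : Prop :=
  2 ≤ p.length ∧ p.Nodup ∧ ∃ u, p.head? = some u ∧ List.Chain' A (p ++ [u]) ∧
    (Alt (InM X M) (NotM A X M) (p ++ [u]) ∨ Alt (NotM A X M) (InM X M) (p ++ [u]))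

/-- The digraph `(V, A)` contains an oriented cycle of length `n`. -/
def HasCycleOfLength (A : V → V → Prop) (n : ℕ) : Prop :=
  ∃ p : List V, IsCycle A p ∧ p.length = n

/-- `(V, A)` is a balanced bipartite digraph with colour classes `X`, `Y` of cardinality `a`. -/
def BalancedBipartite (A : V → V → Prop) (X Y : Finset V) (a : ℕ) : Prop :=
  X.card = a ∧ Y.card = a ∧ Disjoint X Y ∧ (∀ v : V, v ∈ X ∨ v ∈ Y) ∧
    ∀ u v : V, A u v → (u ∈ X ∧ v ∈ Y) ∨ (u ∈ Y ∧ v ∈ X)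

/-- Condition (M): `d(u) + d(v) ≥ 3a + 1` for every pair of distinct vertices `u, v`
with no arc between them in either direction. -/
def CondM (A : V → V → Prop) (a : ℕ) : Prop :=
  ∀ u v : V, u ≠ v → ¬ A u v → ¬ A v u → 3 * a + 1 ≤ deg A u + deg A v

/-- Condition (A): `d(x') + d(y') + d(x'') + d(y'') ≥ 6a + 2` for all pairwise distinct
`x', x'' ∈ X`, `y', y'' ∈ Y` joined by `M`-compatible paths from `x'` to `y'` and from
`x''` to `y''`. -/
def CondA (A : V → V → Prop) (X Y : Finset V) (M : V → V) (a : ℕ) : Prop :=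
  ∀ x' x'' y' y'' : V, x' ∈ X → x'' ∈ X → y' ∈ Y → y'' ∈ Y → x' ≠ x'' → y' ≠ y'' →
    (∃ p, IsCompatPathFromTo A X M p x' y') → (∃ p, IsCompatPathFromTo A X M p x'' y'') →
    6 * a + 2 ≤ deg A x' + deg A y' + deg A x'' + deg A y''

/-- An `M`-compatible cycle all of whose vertices lie in `S`. -/
def IsCompatCycleIn (A : V → V → Prop) (X : Finset V) (M : V → V) (S : Set V)
    (p : List V) : Prop :=
  IsCompatCycle A X M p ∧ ∀ v ∈ p, v ∈ S

/-- An `M`-compatible path from `u` to `v` all of whose vertices lie in `S`. -/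
def IsCompatPathFromToIn (A : V → V → Prop) (X : Finset V) (M : V → V) (S : Set V)
    (p : List V) (u v : V) : Prop :=
  IsCompatPathFromTo A X M p u v ∧ ∀ w ∈ p, w ∈ S

/-- The digraph `(V, A)` is strongly connected. -/
def StronglyConnected (A : V → V → Prop) : Prop :=
  ∀ u v : V, u ≠ v →
    ∃ p : List V, p.Chain' A ∧ p.head? = some u ∧ p.getLast? = some v


section Deg

open scoped Classical

variable [Fintype V] (A : V → V → Prop)

lemma outdeg_eq (v : V) : outdeg A v = (Finset.univ.filter (fun w => A v w)).card := by
  rw [outdeg, Nat.card_eq_fintype_card, Fintype.card_subtype]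

lemma indeg_eq (v : V) : indeg A v = (Finset.univ.filter (fun w => A w v)).card := by
  rw [indeg, Nat.card_eq_fintype_card, Fintype.card_subtype]

lemma outdeg_le_card {T : Finset V} {v : V} (h : ∀ w, A v w → w ∈ T) :
    outdeg A v ≤ T.card := by
  rw [outdeg_eq]
  exact Finset.card_le_card fun w hw => h w (Finset.mem_filter.mp hw).2

lemma indeg_le_card {T : Finset V} {v : V} (h : ∀ w, A w v → w ∈ T) :
    indeg A v ≤ T.card := by
  rw [indeg_eq]
  exact Finset.card_le_card fun w hw => h w (Finset.mem_filter.mp hw).2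

lemma out_full {T : Finset V} {v : V} (h : ∀ w, A v w → w ∈ T)
    (hc : T.card ≤ outdeg A v) : ∀ w ∈ T, A v w := by
  rw [outdeg_eq] at hc
  have hsub : Finset.univ.filter (fun w => A v w) ⊆ T :=
    fun w hw => h w (Finset.mem_filter.mp hw).2
  have heq := Finset.eq_of_subset_of_card_le hsub hc
  intro w hw
  rw [← heq] at hw
  exact (Finset.mem_filter.mp hw).2

lemma in_full {T : Finset V} {v : V} (h : ∀ w, A w v → w ∈ T)
    (hc : T.card ≤ indeg A v) : ∀ w ∈ T, A w v := by
  rw [indeg_eq] at hc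
  have hsub : Finset.univ.filter (fun w => A w v) ⊆ T :=
    fun w hw => h w (Finset.mem_filter.mp hw).2
  have heq := Finset.eq_of_subset_of_card_le hsub hc
  intro w hw
  rw [← heq] at hw
  exact (Finset.mem_filter.mp hw).2

lemma exists_out {v : V} (h : 1 ≤ outdeg A v) : ∃ w, A v w := by
  rw [outdeg_eq] at h
  obtain ⟨w, hw⟩ := Finset.card_pos.mp h
  exact ⟨w, (Finset.mem_filter.mp hw).2⟩

end Deg

/-- interleaving of two lists -/
def weave : List V → List V → List V
  | [], _ => []
  | _ :: _, [] => []
  | b :: bs, c :: cs => b :: c :: weave bs cs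

lemma weave_perm : ∀ bs cs : List V, bs.length = cs.length →
    (weave bs cs).Perm (bs ++ cs)
  | [], [], _ => by simp [weave]
  | [], _ :: _, h => by simp at h
  | _ :: _, [], h => by simp at h
  | b :: bs, c :: cs, h => by
    have ih := weave_perm bs cs (by simpa using h)
    show (b :: c :: weave bs cs).Perm _
    exact ((ih.cons c).cons b).trans ((List.perm_middle.symm).cons b)

lemma chain_weave (A : V → V → Prop) (w1 : V) : ∀ bs cs : List V, bs.length = cs.length →
    (∀ b ∈ bs, ∀ c ∈ cs, A b c) → (∀ c ∈ cs, ∀ b ∈ bs, A c b) → (∀ c ∈ cs, A c w1) →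
    List.Chain' A (weave bs cs ++ [w1]) ∧
      ∀ b bs', bs = b :: bs' → (weave bs cs).head? = some b
  | [], [], _, _, _, _ => by constructor <;> simp [weave, List.Chain', List.isChain_singleton]
  | [], _ :: _, h, _, _, _ => by simp at h
  | _ :: _, [], h, _, _, _ => by simp at h
  | b :: bs, c :: cs, h, h1, h2, h3 => by
    have ih := chain_weave A w1 bs cs (by simpa using h)
      (fun b hb c hc => h1 b (List.mem_cons_of_mem _ hb) c (List.mem_cons_of_mem _ hc))
      (fun c hc b hb => h2 c (List.mem_cons_of_mem _ hc) b (List.mem_cons_of_mem _ hb))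
      (fun c hc => h3 c (List.mem_cons_of_mem _ hc))
    constructor
    · show List.Chain' A (b :: c :: (weave bs cs ++ [w1]))
      unfold List.Chain'; rw [List.isChain_cons_cons]
      refine ⟨h1 b (by simp) c (by simp), ?_⟩
      rw [List.isChain_cons]
      refine ⟨?_, ih.1⟩
      intro d hd
      match bs, cs, h with
      | [], [], _ =>
        simp [weave] at hd
        subst hd
        exact h3 c (by simp)
      | b' :: bs', c' :: cs', h =>
        rw [show weave (b'::bs') (c'::cs') ++ [w1]
              = b' :: (c' :: (weave bs' cs' ++ [w1])) from rfl] at hd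
        simp at hd
        subst hd
        exact h2 c (by simp) b' (by simp)
    · intro b0 bs0 he
      cases he
      rfl


lemma walk_to_path (A : V → V → Prop) (X Y : Finset V) (M : V → V)
    (hmatch : CompleteMatching A X Y M)
    (hXY : ∀ v ∈ X, v ∉ Y) (x'' : V) :
    ∀ n (x : V) (rest : List V), (x :: rest).length ≤ n →
      (∀ w ∈ x :: rest, w ∈ X) →
      List.Chain' (fun u v => A (M u) v) (x :: rest) →
      (x :: rest).getLast? = some x'' →
      ∀ y, y ∈ Y → A y x →
      ∃ p, IsCompatPathFromTo A X M p y x'' ∧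
        ∀ w ∈ p, w = y ∨ w ∈ x :: rest ∨ ∃ b ∈ (x :: rest).dropLast, M b = w := by
  intro n
  induction n with
  | zero => intro x rest h; simp at h
  | succ n ih =>
    intro x rest hlen hX hch hlast y hy hyx
    have hxX : x ∈ X := hX x (by simp)
    by_cases hx : x = x''
    · subst hx
      have hyne : y ≠ x := fun h => hXY x hxX (h ▸ hy)
      refine ⟨[y, x], ⟨⟨by simp, by simp [hyne], List.isChain_pair.mpr hyx, Or.inr ?_⟩,
        by simp, by simp⟩, ?_⟩
      · simp only [Alt]
        exact ⟨⟨hyx, fun hin => hXY y hin.1 hy⟩, trivial⟩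
      · intro w hw
        simp only [List.mem_cons] at hw
        rcases hw with rfl | hw
        · exact Or.inl rfl
        · simp at hw
          subst hw
          exact Or.inr (Or.inl (by simp))
    · rcases rest with _ | ⟨x2, rest'⟩
      · simp at hlast; exact absurd hlast hx
      · by_cases hxr : x ∈ x2 :: rest'
        · -- drop to the later occurrence of x
          obtain ⟨l1, l2, hsp⟩ := List.append_of_mem hxr
          have hl2 : l2 ≠ [] := by
            rintro rfl
            rw [hsp, show x :: (l1 ++ [x]) = (x :: l1) ++ [x] from rfl,
              List.getLast?_concat] at hlast
            exact hx (Option.some.inj hlast)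
          have hsuff : (x :: l2) <:+ (x :: x2 :: rest') := by
            rw [hsp]; exact ⟨x :: l1, rfl⟩
          have hlast' : (x :: l2).getLast? = some x'' := by
            rw [hsp, show x :: (l1 ++ x :: l2) = (x :: l1) ++ (x :: l2) from rfl,
              List.getLast?_append_of_ne_nil _ (by simp)] at hlast
            exact hlast
          have hlen' : (x :: l2).length ≤ n := by
            have := congrArg List.length hsp
            simp only [List.length_cons, List.length_append] at hlen this ⊢
            omega
          obtain ⟨p, hp, hsub⟩ := ih x l2 hlen' (fun w hw => hX w (hsuff.subset hw))
            (hch.suffix hsuff) hlast' y hy hyx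
          refine ⟨p, hp, fun w hw => ?_⟩
          rcases hsub w hw with h | h | ⟨b, hb, he⟩
          · exact Or.inl h
          · exact Or.inr (Or.inl (hsuff.subset h))
          · refine Or.inr (Or.inr ⟨b, ?_, he⟩)
            rw [hsp, show x :: (l1 ++ x :: l2) = (x :: l1) ++ (x :: l2) from rfl,
              List.dropLast_append_of_ne_nil (by simp)]
            exact List.mem_append_right _ hb
        · by_cases hMby : ∃ b ∈ (x2 :: rest').dropLast, M b = y
          · -- restart the walk just after b with M b = y
            obtain ⟨b, hb, hMb⟩ := hMby
            have hrne : (x2 :: rest') ≠ [] := by simp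
            obtain ⟨l1, l2', hsp'⟩ := List.append_of_mem hb
            have hsp : x2 :: rest' = l1 ++ b :: (l2' ++ [(x2 :: rest').getLast hrne]) := by
              conv_lhs => rw [← List.dropLast_append_getLast hrne]
              rw [hsp']
              simp
            set last := (x2 :: rest').getLast hrne with hlastdef
            have hsuffb : (b :: (l2' ++ [last])) <:+ (x :: x2 :: rest') := by
              rw [hsp]; exact ⟨x :: l1, rfl⟩
            have hchb : List.Chain' (fun u v => A (M u) v) (b :: (l2' ++ [last])) :=
              hch.suffix hsuffb
            rcases hE : l2' ++ [last] with _ | ⟨c, l3⟩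
            · exact absurd hE (by simp)
            · rw [hE] at hchb
              have hAyc : A y c := by
                have := (List.isChain_cons_cons.mp hchb).1
                rwa [hMb] at this
              have hchc : List.Chain' (fun u v => A (M u) v) (c :: l3) :=
                (List.isChain_cons_cons.mp hchb).2
              have hlastc : (c :: l3).getLast? = some x'' := by
                rw [← hE, List.getLast?_concat]
                have h1 : (x2 :: rest').getLast? = some x'' := by
                  rwa [List.getLast?_cons_cons] at hlast
                rw [List.getLast?_eq_getLast hrne] at h1
                exact congrArg some (Option.some.inj h1)
              have hmemc : ∀ w ∈ c :: l3, w ∈ X := by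
                intro w hw
                exact hX w (hsuffb.subset (by rw [hE]; exact List.mem_cons_of_mem _ hw))
              have hlenc : (c :: l3).length ≤ n := by
                have h1 := congrArg List.length hsp
                have h2 := congrArg List.length hE
                simp only [List.length_cons, List.length_append, List.length_singleton]
                  at hlen h1 h2 ⊢
                omega
              obtain ⟨p, hp, hsub⟩ := ih c l3 hlenc hmemc hchc hlastc y hy hAyc
              refine ⟨p, hp, fun w hw => ?_⟩
              rcases hsub w hw with h | h | ⟨b', hb', he⟩
              · exact Or.inl h
              · exact Or.inr (Or.inl (hsuffb.subset (by rw [hE]; exact List.mem_cons_of_mem _ h)))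
              · refine Or.inr (Or.inr ⟨b', ?_, he⟩)
                have hb'' : b' ∈ l2' := by
                  have : (c :: l3).dropLast = l2' := by
                    rw [← hE]
                    exact List.dropLast_concat ..
                  rwa [this] at hb'
                show b' ∈ (x :: x2 :: rest').dropLast
                rw [show (x :: x2 :: rest').dropLast = x :: (x2 :: rest').dropLast from rfl,
                  hsp']
                simp [hb'']
          · by_cases hMxy : M x = y
            · -- the walk minus its first step starts again at y
              have hAyx2 : A y x2 := by
                have := (List.isChain_cons_cons.mp hch).1
                rwa [hMxy] at this
              have hlen' : (x2 :: rest').length ≤ n := by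
                simp only [List.length_cons] at hlen ⊢; omega
              obtain ⟨p, hp, hsub⟩ := ih x2 rest' hlen'
                (fun w hw => hX w (List.mem_cons_of_mem _ hw))
                (List.isChain_cons_cons.mp hch).2
                (by rwa [List.getLast?_cons_cons] at hlast) y hy hAyx2
              refine ⟨p, hp, fun w hw => ?_⟩
              rcases hsub w hw with h | h | ⟨b, hb, he⟩
              · exact Or.inl h
              · exact Or.inr (Or.inl (List.mem_cons_of_mem _ h))
              · exact Or.inr (Or.inr ⟨b, List.mem_cons_of_mem _ hb, he⟩)
            · -- main splice case
              have hz1 := hmatch.1 x hxX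
              set z1 := M x with hz1def
              have hAz1x2 : A z1 x2 := (List.isChain_cons_cons.mp hch).1
              have hlen' : (x2 :: rest').length ≤ n := by
                simp only [List.length_cons] at hlen ⊢; omega
              obtain ⟨p, ⟨hpc, hph, hpl⟩, hsub⟩ := ih x2 rest' hlen'
                (fun w hw => hX w (List.mem_cons_of_mem _ hw))
                (List.isChain_cons_cons.mp hch).2
                (by rwa [List.getLast?_cons_cons] at hlast) z1 hz1.1 hAz1x2
              obtain ⟨q, rfl⟩ : ∃ q, p = z1 :: q := by
                rcases p with _ | ⟨h0, q⟩
                · simp at hph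
                · simp at hph
                  exact ⟨q, by rw [hph]⟩
              have hxnp : x ∉ z1 :: q := by
                intro hxp
                rcases hsub x hxp with h | h | ⟨b, hb, he⟩
                · exact hXY x hxX (h ▸ hz1.1)
                · exact hxr h
                · have hbX : b ∈ X :=
                    hX b (List.mem_cons_of_mem _ ((List.dropLast_sublist _).subset hb))
                  exact hXY x hxX (he ▸ (hmatch.1 b hbX).1)
              have hynp : y ∉ z1 :: q := by
                intro hyp
                rcases hsub y hyp with h | h | ⟨b, hb, he⟩
                · exact hMxy (h.symm)
                · exact hXY y (hX y (List.mem_cons_of_mem _ h)) hy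
                · exact hMby ⟨b, hb, he⟩
              have hyne : y ≠ x := fun h => hXY x hxX (h ▸ hy)
              have halt : Alt (NotM A X M) (InM X M) (z1 :: q) := by
                rcases hpc.2.2.2 with h | h
                · rcases q with _ | ⟨w, q'⟩
                  · trivial
                  · simp only [Alt] at h
                    exact absurd h.1.1 (fun hz1X => hXY z1 hz1X hz1.1)
                · exact h
              refine ⟨y :: x :: z1 :: q, ⟨⟨by simp, ?_, ?_, Or.inr ?_⟩, by simp, ?_⟩, ?_⟩
              · rw [List.nodup_cons, List.nodup_cons]
                refine ⟨?_, hxnp, hpc.2.1⟩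
                simp only [List.mem_cons]
                rintro (rfl | hyq)
                · exact hyne rfl
                · exact hynp (by simpa using hyq)
              · unfold List.Chain'; rw [List.isChain_cons_cons]
                exact ⟨hyx, List.isChain_cons_cons.mpr ⟨hz1.2, hpc.2.2.1⟩⟩
              · simp only [Alt]
                exact ⟨⟨hyx, fun hin => hXY y hin.1 hy⟩, ⟨hxX, rfl⟩, halt⟩
              · rw [List.getLast?_cons_cons, List.getLast?_cons_cons]
                exact hpl
              · intro w hw
                simp only [List.mem_cons] at hw
                rcases hw with rfl | rfl | hw
                · exact Or.inl rfl
                · exact Or.inr (Or.inl (by simp))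
                · have hw' : w ∈ z1 :: q := by
                    simpa using hw
                  rcases hsub w hw' with h | h | ⟨b, hb, he⟩
                  · refine Or.inr (Or.inr ⟨x, ?_, h ▸ rfl⟩)
                    show x ∈ x :: (x2 :: rest').dropLast
                    simp
                  · exact Or.inr (Or.inl (List.mem_cons_of_mem _ h))
                  · refine Or.inr (Or.inr ⟨b, ?_, he⟩)
                    show b ∈ x :: (x2 :: rest').dropLast
                    exact List.mem_cons_of_mem _ hb


lemma build_cycle (A : V → V → Prop) (w1 w2 : V) (bs cs : List V)
    (hlen : bs.length = cs.length) (b0 : V) (bs0 : List V) (hbs : bs = b0 :: bs0)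
    (hnd : (bs ++ cs).Nodup) (hw1 : w1 ∉ bs ++ cs) (hw2 : w2 ∉ bs ++ cs) (hw12 : w1 ≠ w2)
    (h1 : ∀ b ∈ bs, ∀ c ∈ cs, A b c) (h2 : ∀ c ∈ cs, ∀ b ∈ bs, A c b)
    (h3 : ∀ c ∈ cs, A c w1) (h4 : A w1 w2) (h5 : ∀ b ∈ bs, A w2 b) :
    HasCycleOfLength A (2 + (bs.length + cs.length)) := by
  obtain ⟨hch, hhd⟩ := chain_weave A w1 bs cs hlen h1 h2 h3
  have hp := weave_perm bs cs hlen
  refine ⟨w1 :: w2 :: weave bs cs, ⟨by simp, ?_, w1, rfl, ?_⟩, ?_⟩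
  · rw [List.nodup_cons, List.nodup_cons]
    refine ⟨?_, ?_, (hp.nodup_iff).mpr hnd⟩
    · simp only [List.mem_cons]
      rintro (rfl | hw)
      · exact hw12 rfl
      · exact hw1 (hp.mem_iff.mp hw)
    · intro hw
      exact hw2 (hp.mem_iff.mp hw)
  · show List.Chain' A (w1 :: w2 :: (weave bs cs ++ [w1]))
    unfold List.Chain'; rw [List.isChain_cons_cons]
    refine ⟨h4, ?_⟩
    rw [List.isChain_cons]
    refine ⟨?_, hch⟩
    intro d hd
    subst hbs
    rcases cs with _ | ⟨c0, cs0⟩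
    · simp at hlen
    · have : (weave (b0 :: bs0) (c0 :: cs0)).head? = some b0 := hhd b0 bs0 rfl
      rw [show weave (b0::bs0) (c0::cs0) ++ [w1] = b0 :: (c0 :: weave bs0 cs0 ++ [w1]) from rfl]
        at hd
      simp at hd
      subst hd
      exact h5 b0 (by simp)
  · have := hp.length_eq
    simp only [List.length_cons]
    rw [this]
    simp [Nat.add_comm]
    omega


lemma chain'_pred {R : V → V → Prop} : ∀ (l : List V) (v : V), List.Chain' R l →
    l.getLast? = some v → l = [v] ∨ ∃ b ∈ l, R b v
  | [], v, _, h => by simp at h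
  | [a], v, _, h => by
    simp at h
    subst h
    exact Or.inl rfl
  | a :: b :: t, v, hc, h => by
    rw [List.getLast?_cons_cons] at h
    rcases chain'_pred (b :: t) v (List.isChain_cons_cons.mp hc).2 h with he | ⟨b', hb', hR⟩
    · refine Or.inr ⟨a, by simp, ?_⟩
      obtain ⟨rfl, -⟩ := List.cons.inj he
      exact (List.isChain_cons_cons.mp hc).1
    · exact Or.inr ⟨b', List.mem_cons_of_mem _ hb', hR⟩

/-- A definition of reachability by a "compatible walk". -/
def Reaches (A : V → V → Prop) (X : Finset V) (M : V → V) (x'' y : V) : Prop :=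
  ∃ x rest, (∀ w ∈ x :: rest, w ∈ X) ∧ List.Chain' (fun u v => A (M u) v) (x :: rest) ∧
    (x :: rest).getLast? = some x'' ∧ A y x

theorem key [Fintype V] [DecidableEq V] (A : V → V → Prop)
    (X Y : Finset V) (a : ℕ) (ha : 2 ≤ a)
    (hbb : BalancedBipartite A X Y a) (hM : CondM A a)
    (M : V → V) (hmatch : CompleteMatching A X Y M)
    (hnoham : ¬ HasCycleOfLength A (2 * a))
    (y' x'' : V) (hy' : y' ∈ Y) (hx'' : x'' ∈ X)
    (hno : ¬ ∃ p, IsCompatPathFromTo A X M p y' x'') : False := by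
  classical
  obtain ⟨hXc, hYc, hdisj, hcover, harcs⟩ := hbb
  have hXY : ∀ v ∈ X, v ∉ Y := fun v hv hv' => Finset.disjoint_left.mp hdisj hv hv'
  have hYX : ∀ v ∈ Y, v ∉ X := fun v hv hv' => hXY v hv' hv
  have harcYX : ∀ u v, A u v → u ∈ Y → v ∈ X := by
    intro u v h hu
    rcases harcs u v h with ⟨h1, h2⟩ | ⟨h1, h2⟩
    · exact absurd hu (hXY u h1)
    · exact h2
  have harcXY : ∀ u v, A u v → v ∈ X → u ∈ Y := by
    intro u v h hv
    rcases harcs u v h with ⟨h1, h2⟩ | ⟨h1, h2⟩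
    · exact absurd hv (hYX v h2)
    · exact h1
  have harcXo : ∀ u v, A u v → u ∈ X → v ∈ Y := by
    intro u v h hu
    rcases harcs u v h with ⟨h1, h2⟩ | ⟨h1, h2⟩
    · exact h2
    · exact absurd hu (hYX u h1)
  have harcYi : ∀ u v, A u v → v ∈ Y → u ∈ X := by
    intro u v h hv
    rcases harcs u v h with ⟨h1, h2⟩ | ⟨h1, h2⟩
    · exact h1
    · exact absurd hv (hXY v h2)
  have hnoXX : ∀ u v, u ∈ X → v ∈ X → ¬ A u v :=
    fun u v hu hv h => hXY v hv (harcXo u v h hu)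
  have hnoYY : ∀ u v, u ∈ Y → v ∈ Y → ¬ A u v :=
    fun u v hu hv h => hYX v hv (harcYX u v h hu)
  have houtY : ∀ y ∈ Y, outdeg A y ≤ a :=
    fun y hy => hXc ▸ outdeg_le_card A (fun w hw => harcYX y w hw hy)
  have hinY : ∀ y ∈ Y, indeg A y ≤ a :=
    fun y hy => hXc ▸ indeg_le_card A (fun w hw => harcYi w y hw hy)
  have houtX : ∀ x ∈ X, outdeg A x ≤ a :=
    fun x hx => hYc ▸ outdeg_le_card A (fun w hw => harcXo x w hw hx)
  have hinX : ∀ x ∈ X, indeg A x ≤ a :=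
    fun x hx => hYc ▸ indeg_le_card A (fun w hw => harcXY w x hw hx)
  have hMmem := hmatch.1
  have hMinj := hmatch.2
  have himg : X.image M = Y := by
    apply Finset.eq_of_subset_of_card_le
    · intro w hw
      obtain ⟨x, hx, rfl⟩ := Finset.mem_image.mp hw
      exact (hMmem x hx).1
    · rw [Finset.card_image_of_injOn hMinj, hXc, hYc]
  have hsurj : ∀ y ∈ Y, ∃ x ∈ X, M x = y := by
    intro y hy
    rw [← himg] at hy
    simpa [Finset.mem_image] using hy
  set U : Finset V := Y.filter (fun y => ¬ Reaches A X M x'' y) with hU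
  have hUY : U ⊆ Y := Finset.filter_subset _ _
  have hmemU : ∀ y, y ∈ U ↔ y ∈ Y ∧ ¬ Reaches A X M x'' y := fun y => Finset.mem_filter
  have hy'U : y' ∈ U := by
    rw [hmemU]
    refine ⟨hy', ?_⟩
    rintro ⟨x, rest, hmem, hch, hlast, harc⟩
    obtain ⟨p, hp, -⟩ := walk_to_path A X Y M hmatch hXY x'' (x :: rest).length x rest
      le_rfl hmem hch hlast y' hy' harc
    exact hno ⟨p, hp⟩
  have hclosed : ∀ y ∈ U, ∀ x, A y x → x ∈ X ∧ M x ∈ U := by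
    intro y hyU x hax
    have hyY := hUY hyU
    have hxX : x ∈ X := harcYX y x hax hyY
    refine ⟨hxX, ?_⟩
    rw [hmemU]
    refine ⟨(hMmem x hxX).1, ?_⟩
    rintro ⟨x1, rest, hmem, hch, hlast, harc⟩
    refine ((hmemU y).mp hyU).2 ⟨x, x1 :: rest, ?_, ?_, ?_, hax⟩
    · intro w hw
      rcases List.mem_cons.mp hw with rfl | hw
      · exact hxX
      · exact hmem w hw
    · exact List.isChain_cons_cons.mpr ⟨harc, hch⟩
    · rw [List.getLast?_cons_cons]
      exact hlast
  have hUx'' : ∀ y ∈ U, ¬ A y x'' := by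
    intro y hyU h
    exact ((hmemU y).mp hyU).2 ⟨x'', [], by simp [hx''], List.isChain_singleton _, by simp, h⟩
  set XU : Finset V := X.filter (fun x => M x ∈ U) with hXUdef
  have hXUX : XU ⊆ X := Finset.filter_subset _ _
  have hXUcard : XU.card = U.card := by
    have himg2 : XU.image M = U := by
      apply Finset.Subset.antisymm
      · intro w hw
        obtain ⟨x, hx, rfl⟩ := Finset.mem_image.mp hw
        exact (Finset.mem_filter.mp hx).2
      · intro y hyU
        obtain ⟨x, hxX, rfl⟩ := hsurj y (hUY hyU)
        exact Finset.mem_image_of_mem M (Finset.mem_filter.mpr ⟨hxX, hyU⟩)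
    rw [← himg2]
    exact (Finset.card_image_of_injOn (hMinj.mono (by exact_mod_cast Finset.coe_subset.mpr hXUX))).symm
  set u : ℕ := U.card with hudef
  have hu1 : 1 ≤ u := Finset.card_pos.mpr ⟨y', hy'U⟩
  have hua : u ≤ a := hYc ▸ Finset.card_le_card hUY
  have houtU : ∀ y ∈ U, outdeg A y ≤ u := by
    intro y hy
    refine hXUcard ▸ outdeg_le_card A (fun w hw => ?_)
    obtain ⟨h1, h2⟩ := hclosed y hy w hw
    exact Finset.mem_filter.mpr ⟨h1, h2⟩
  have hdegU : ∀ y ∈ U, deg A y ≤ a + u := by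
    intro y hy
    have h1 := houtU y hy
    have h2 := hinY y (hUY hy)
    unfold deg
    omega
  have hYU : (Y \ U).card = a - u := by rw [Finset.card_sdiff_of_subset hUY, hYc]
  have hinCU : ∀ x ∈ X, x ∉ XU → indeg A x ≤ a - u := by
    intro x hxX hxXU
    refine hYU ▸ indeg_le_card A (fun w hw => ?_)
    have hwY : w ∈ Y := harcXY w x hw hxX
    refine Finset.mem_sdiff.mpr ⟨hwY, fun hwU => hxXU ?_⟩
    exact Finset.mem_filter.mpr ⟨hxX, (hclosed w hwU x hw).2⟩
  have hinx'' : indeg A x'' ≤ a - u := by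
    refine hYU ▸ indeg_le_card A (fun w hw => ?_)
    have hwY : w ∈ Y := harcXY w x'' hw hx''
    exact Finset.mem_sdiff.mpr ⟨hwY, fun hwU => hUx'' w hwU hw⟩
  have hdegCU : ∀ x ∈ X, x ∉ XU → deg A x ≤ a + (a - u) := by
    intro x h1 h2
    have h3 := houtX x h1
    have h4 := hinCU x h1 h2
    unfold deg
    omega
  -- step alpha: U ≠ Y
  have huna : u ≠ a := by
    intro h
    have hin0 : indeg A x'' = 0 := by omega
    have hex : (X.erase x'').Nonempty := by
      rw [← Finset.card_pos, Finset.card_erase_of_mem hx'']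
      omega
    obtain ⟨x, hx⟩ := hex
    have hxX : x ∈ X := Finset.mem_of_mem_erase hx
    have hxne : x ≠ x'' := Finset.ne_of_mem_erase hx
    have hc := hM x'' x (Ne.symm hxne) (hnoXX x'' x hx'' hxX) (hnoXX x x'' hxX hx'')
    have h1 := houtX x'' hx''
    have h2 := houtX x hxX
    have h3 := hinX x hxX
    unfold deg at hc
    omega
  -- step beta: complete arcs from X \ XU to U
  have hcomp : ∀ x ∈ X, x ∉ XU → ∀ y ∈ U, A x y := by
    intro x hxX hxXU y hyU
    by_contra hAxy
    have hAyx : ¬ A y x := fun h => hxXU (Finset.mem_filter.mpr ⟨hxX, (hclosed y hyU x h).2⟩)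
    have hne : y ≠ x := fun h => hYX y (hUY hyU) (h ▸ hxX)
    have hc := hM y x hne hAyx hAxy
    have h1 := hdegU y hyU
    have h2 := hdegCU x hxX hxXU
    omega
  have hcases : u = 1 ∨ (2 ≤ u ∧ u + 2 ≤ a) ∨ u + 1 = a := by omega
  rcases hcases with h1 | ⟨h2a, h2b⟩ | h3
  -- CASE u = 1
  · have hUeq : U = {y'} := by
      obtain ⟨yy, hyy⟩ := Finset.card_eq_one.mp h1
      have : y' ∈ ({yy} : Finset V) := hyy ▸ hy'U
      rw [Finset.mem_singleton] at this
      rw [hyy, this]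
    obtain ⟨x0, hXU0⟩ := Finset.card_eq_one.mp (hXUcard.trans h1)
    have hx0XU : x0 ∈ XU := by rw [hXU0]; exact Finset.mem_singleton_self x0
    have hx0X : x0 ∈ X := hXUX hx0XU
    have hMx0 : M x0 = y' := by
      have := (Finset.mem_filter.mp hx0XU).2
      rw [hUeq, Finset.mem_singleton] at this
      exact this
    have hfull : ∀ y2 ∈ Y.erase y', (∀ xx ∈ X, A y2 xx) ∧ (∀ xx ∈ X, A xx y2) := by
      intro y2 hy2
      have hy2Y : y2 ∈ Y := Finset.mem_of_mem_erase hy2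
      have hy2ne : y2 ≠ y' := Finset.ne_of_mem_erase hy2
      have hc := hM y' y2 (Ne.symm hy2ne) (hnoYY y' y2 hy' hy2Y) (hnoYY y2 y' hy2Y hy')
      have hd1 : deg A y' ≤ a + u := hdegU y' hy'U
      have ho := houtY y2 hy2Y
      have hi := hinY y2 hy2Y
      have ho' : a ≤ outdeg A y2 := by unfold deg at hc hd1; omega
      have hi' : a ≤ indeg A y2 := by unfold deg at hc hd1; omega
      constructor
      · exact out_full A (fun w hw => harcYX y2 w hw hy2Y) (hXc ▸ ho')
      · exact in_full A (fun w hw => harcYi w y2 hw hy2Y) (hXc ▸ hi')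
    have hy2ex : (Y.erase y').Nonempty := by
      rw [← Finset.card_pos, Finset.card_erase_of_mem hy']
      omega
    obtain ⟨y2, hy2⟩ := hy2ex
    have hAy'x0 : A y' x0 := by
      have hy2Y : y2 ∈ Y := Finset.mem_of_mem_erase hy2
      have hy2ne : y2 ≠ y' := Finset.ne_of_mem_erase hy2
      have hc := hM y' y2 (Ne.symm hy2ne) (hnoYY y' y2 hy' hy2Y) (hnoYY y2 y' hy2Y hy')
      have h1' : deg A y2 ≤ a + a := by
        have := houtY y2 hy2Y; have := hinY y2 hy2Y; unfold deg; omega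
      have h2' : indeg A y' ≤ a := hinY y' hy'
      have ho : 1 ≤ outdeg A y' := by unfold deg at hc h1'; omega
      obtain ⟨w, hw⟩ := exists_out A ho
      have hwXU : w ∈ XU := by
        obtain ⟨ha1, ha2⟩ := hclosed y' hy'U w hw
        exact Finset.mem_filter.mpr ⟨ha1, ha2⟩
      rw [hXU0, Finset.mem_singleton] at hwXU
      rwa [hwXU] at hw
    have hallX : ∀ xx ∈ X, A xx y' := by
      intro xx hxx
      by_cases hxx0 : xx ∈ XU
      · rw [hXU0, Finset.mem_singleton] at hxx0
        subst hxx0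
        rw [← hMx0]
        exact (hMmem xx hxx).2
      · exact hcomp xx hxx hxx0 y' hy'U
    -- build the Hamiltonian cycle
    set bs := (Y.erase y').toList with hbsdef
    set cs := (X.erase x0).toList with hcsdef
    have hbsl : bs.length = a - 1 := by
      rw [hbsdef, Finset.length_toList, Finset.card_erase_of_mem hy', hYc]
    have hcsl : cs.length = a - 1 := by
      rw [hcsdef, Finset.length_toList, Finset.card_erase_of_mem hx0X, hXc]
    have hmembs : ∀ b ∈ bs, b ∈ Y.erase y' := fun b hb => Finset.mem_toList.mp hb
    have hmemcs : ∀ c ∈ cs, c ∈ X.erase x0 := fun c hc => Finset.mem_toList.mp hc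
    rcases hE : bs with _ | ⟨b0, bs0⟩
    · rw [hE] at hbsl; simp at hbsl; omega
    · have hcyc := build_cycle A y' x0 bs cs (by rw [hbsl, hcsl]) b0 bs0 hE
        (by
          rw [List.nodup_append]
          refine ⟨(Y.erase y').nodup_toList, (X.erase x0).nodup_toList, ?_⟩
          rintro w hw _ hw' rfl
          have h1' := Finset.mem_of_mem_erase (hmembs w hw)
          have h2' := Finset.mem_of_mem_erase (hmemcs w hw')
          exact hXY w h2' h1')
        (by
          rw [List.mem_append]
          rintro (h | h)
          · exact Finset.notMem_erase y' Y (hmembs _ h)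
          · exact hYX y' hy' (Finset.mem_of_mem_erase (hmemcs _ h)))
        (by
          rw [List.mem_append]
          rintro (h | h)
          · exact hXY x0 hx0X (Finset.mem_of_mem_erase (hmembs _ h))
          · exact Finset.notMem_erase x0 X (hmemcs _ h))
        (fun h => hYX y' hy' (h ▸ hx0X))
        (fun b hb c hc => (hfull b (hmembs b hb)).1 c (Finset.mem_of_mem_erase (hmemcs c hc)))
        (fun c hc b hb => (hfull b (hmembs b hb)).2 c (Finset.mem_of_mem_erase (hmemcs c hc)))
        (fun c hc => hallX c (Finset.mem_of_mem_erase (hmemcs c hc)))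
        hAy'x0
        (fun b hb => (hfull b (hmembs b hb)).2 x0 hx0X)
      have hlen2 : 2 + (bs.length + cs.length) = 2 * a := by rw [hbsl, hcsl]; omega
      rw [hlen2] at hcyc
      exact hnoham hcyc
  -- CASE 2 ≤ u ≤ a - 2
  · obtain ⟨y1, hy1, y2, hy2, hyne⟩ := Finset.one_lt_card.mp (by omega : 1 < U.card)
    have hc1 := hM y1 y2 hyne (hnoYY y1 y2 (hUY hy1) (hUY hy2)) (hnoYY y2 y1 (hUY hy2) (hUY hy1))
    have hd1 := hdegU y1 hy1
    have hd2 := hdegU y2 hy2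
    have hCcard : (X \ XU).card = a - u := by
      rw [Finset.card_sdiff_of_subset hXUX, hXc, hXUcard]
    obtain ⟨x1, hx1, x2, hx2, hxne⟩ := Finset.one_lt_card.mp
      (by rw [hCcard]; omega : 1 < (X \ XU).card)
    obtain ⟨hx1X, hx1XU⟩ := Finset.mem_sdiff.mp hx1
    obtain ⟨hx2X, hx2XU⟩ := Finset.mem_sdiff.mp hx2
    have hc2 := hM x1 x2 hxne (hnoXX x1 x2 hx1X hx2X) (hnoXX x2 x1 hx2X hx1X)
    have hd3 := hdegCU x1 hx1X hx1XU
    have hd4 := hdegCU x2 hx2X hx2XU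
    omega
  -- CASE u = a - 1
  · have hYUcard : (Y \ U).card = 1 := by omega
    obtain ⟨z, hz⟩ := Finset.card_eq_one.mp hYUcard
    have hzmem : z ∈ Y \ U := by rw [hz]; exact Finset.mem_singleton_self z
    obtain ⟨hzY, hznU⟩ := Finset.mem_sdiff.mp hzmem
    have hCcard : (X \ XU).card = 1 := by
      rw [Finset.card_sdiff_of_subset hXUX, hXc, hXUcard]; omega
    obtain ⟨c, hc⟩ := Finset.card_eq_one.mp hCcard
    have hcmem : c ∈ X \ XU := by rw [hc]; exact Finset.mem_singleton_self c
    obtain ⟨hcX, hcXU⟩ := Finset.mem_sdiff.mp hcmem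
    have hMcz : M c = z := by
      have h1' : M c ∈ Y := (hMmem c hcX).1
      have h2' : M c ∉ U := fun h => hcXU (Finset.mem_filter.mpr ⟨hcX, h⟩)
      have : M c ∈ Y \ U := Finset.mem_sdiff.mpr ⟨h1', h2'⟩
      rw [hz, Finset.mem_singleton] at this
      exact this
    have houtc : ∀ yy ∈ Y, A c yy := by
      intro yy hyy
      by_cases hyyU : yy ∈ U
      · exact hcomp c hcX hcXU yy hyyU
      · have : yy ∈ Y \ U := Finset.mem_sdiff.mpr ⟨hyy, hyyU⟩
        rw [hz, Finset.mem_singleton] at this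
        subst this
        rw [← hMcz]
        exact (hMmem c hcX).2
    have hinc : indeg A c ≤ 1 := by
      have := hinCU c hcX hcXU; omega
    have hinx''1 : indeg A x'' ≤ 1 := by omega
    by_cases hcx : c = x''
    · subst hcx
      -- get A z c
      have hReachz : Reaches A X M c z := by
        by_contra hR
        exact hznU (Finset.mem_filter.mpr ⟨hzY, hR⟩)
      have hAzc : A z c := by
        obtain ⟨x1, rest, hmem, hch, hlast, harc⟩ := hReachz
        rcases chain'_pred (x1 :: rest) c hch hlast with he | ⟨b, hb, hR⟩
        · obtain ⟨rfl, -⟩ := List.cons.inj he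
          exact harc
        · have hbX : b ∈ X := hmem b hb
          have hMbY : M b ∈ Y := (hMmem b hbX).1
          have hMbnU : M b ∉ U := fun h => hUx'' (M b) h hR
          have : M b ∈ Y \ U := Finset.mem_sdiff.mpr ⟨hMbY, hMbnU⟩
          rw [hz, Finset.mem_singleton] at this
          rwa [this] at hR
      have hfull2 : ∀ xx ∈ X.erase c, (∀ yy ∈ Y, A xx yy) ∧ (∀ yy ∈ Y, A yy xx) := by
        intro xx hxx
        have hxxX : xx ∈ X := Finset.mem_of_mem_erase hxx
        have hxxne : xx ≠ c := Finset.ne_of_mem_erase hxx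
        have hcc := hM c xx (fun h => hxxne h.symm) (hnoXX c xx hcX hxxX) (hnoXX xx c hxxX hcX)
        have hd1 : deg A c ≤ a + 1 := by
          have := houtX c hcX; unfold deg; omega
        have ho := houtX xx hxxX
        have hi := hinX xx hxxX
        have ho' : a ≤ outdeg A xx := by unfold deg at hcc hd1; omega
        have hi' : a ≤ indeg A xx := by unfold deg at hcc hd1; omega
        constructor
        · exact out_full A (fun w hw => harcXo xx w hw hxxX) (hYc ▸ ho')
        · exact in_full A (fun w hw => harcXY w xx hw hxxX) (hYc ▸ hi')
      set bs := (Y.erase z).toList with hbsdef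
      set cs := (X.erase c).toList with hcsdef
      have hbsl : bs.length = a - 1 := by
        rw [hbsdef, Finset.length_toList, Finset.card_erase_of_mem hzY, hYc]
      have hcsl : cs.length = a - 1 := by
        rw [hcsdef, Finset.length_toList, Finset.card_erase_of_mem hcX, hXc]
      have hmembs : ∀ b ∈ bs, b ∈ Y.erase z := fun b hb => Finset.mem_toList.mp hb
      have hmemcs : ∀ cc ∈ cs, cc ∈ X.erase c := fun cc hcc => Finset.mem_toList.mp hcc
      rcases hE : bs with _ | ⟨b0, bs0⟩
      · rw [hE] at hbsl; simp at hbsl; omega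
      · have hcyc := build_cycle A z c bs cs (by rw [hbsl, hcsl]) b0 bs0 hE
          (by
            rw [List.nodup_append]
            refine ⟨(Y.erase z).nodup_toList, (X.erase c).nodup_toList, ?_⟩
            rintro w hw _ hw' rfl
            have h1' := Finset.mem_of_mem_erase (hmembs w hw)
            have h2' := Finset.mem_of_mem_erase (hmemcs w hw')
            exact hXY w h2' h1')
          (by
            rw [List.mem_append]
            rintro (h | h)
            · exact Finset.notMem_erase z Y (hmembs _ h)
            · exact hYX z hzY (Finset.mem_of_mem_erase (hmemcs _ h)))
          (by
            rw [List.mem_append]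
            rintro (h | h)
            · exact hXY c hcX (Finset.mem_of_mem_erase (hmembs _ h))
            · exact Finset.notMem_erase c X (hmemcs _ h))
          (fun h => hYX z hzY (h ▸ hcX))
          (fun b hb cc hcc =>
            (hfull2 cc (hmemcs cc hcc)).2 b (Finset.mem_of_mem_erase (hmembs b hb)))
          (fun cc hcc b hb =>
            (hfull2 cc (hmemcs cc hcc)).1 b (Finset.mem_of_mem_erase (hmembs b hb)))
          (fun cc hcc => (hfull2 cc (hmemcs cc hcc)).1 z hzY)
          hAzc
          (fun b hb => houtc b (Finset.mem_of_mem_erase (hmembs b hb)))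
        have hlen2 : 2 + (bs.length + cs.length) = 2 * a := by rw [hbsl, hcsl]; omega
        rw [hlen2] at hcyc
        exact hnoham hcyc
    · have hcM := hM c x'' hcx (hnoXX c x'' hcX hx'') (hnoXX x'' c hx'' hcX)
      have h1' : deg A c ≤ a + 1 := by
        have := houtX c hcX; unfold deg; omega
      have h2' : deg A x'' ≤ a + 1 := by
        have := houtX x'' hx''; unfold deg; omega
      omega


/-- under condition (M), with a complete matching `M` from `X` to `Y` and
no cycle of length `2a`, fix distinct `y' ∈ Y`, `x'' ∈ X`, and let `S` be the set of
vertices of `Y \ {y'}` reachable from `y'` along an `M`-compatible path of positive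
length.  If there is no `M`-compatible path from `y'` to `x''`, then
`(a-1)/2 ≤ |S| ≤ (a-2)/2` (a contradiction); in particular an `M`-compatible path
from `y'` to `x''` always exists. -/
theorem stmt14 {V : Type} [Fintype V] [DecidableEq V] (A : V → V → Prop)
    (X Y : Finset V) (a : ℕ) (ha : 2 ≤ a)
    (hbb : BalancedBipartite A X Y a) (hM : CondM A a)
    (M : V → V) (hmatch : CompleteMatching A X Y M)
    (hnoham : ¬ HasCycleOfLength A (2 * a))
    (y' : V) (x'' : V) (hy' : y' ∈ Y) (hx'' : x'' ∈ X) (hne : y' ≠ x'')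
    (S : Set V)
    (hS : S = {y : V | y ∈ Y ∧ y ≠ y' ∧
      ∃ p : List V, IsCompatPathFromTo A X M p y' y ∧ 2 ≤ p.length}) :
    ((¬ ∃ p : List V, IsCompatPathFromTo A X M p y' x'') →
      ((a : ℝ) - 1) / 2 ≤ (Nat.card S : ℝ) ∧ (Nat.card S : ℝ) ≤ ((a : ℝ) - 2) / 2) ∧
    ∃ p : List V, IsCompatPathFromTo A X M p y' x'' := by
  have hkey : ∃ p, IsCompatPathFromTo A X M p y' x'' := by
    by_contra hno
    exact key A X Y a ha hbb hM M hmatch hnoham y' x'' hy' hx'' hno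
  exact ⟨fun hno => absurd hkey hno, hkey⟩

end BipDigraph
end

section
/- Let D' be a balanced bipartite digraph with colour classes X', Y' of cardinality a' ≥ 2 possessing a complete matching M' from X' to Y', satisfying condition (A). Then D' contains a vertex x ∈ X' with in-degree at least 2 or a vertex y ∈ Y' with out-degree at least 2; consequently D' contains an M'-compatible path of order at least 4. -/
namespace BipDigraph

variable {V : Type}

lemma two_le_natCard {α : Type} [Fintype α] {p : α → Prop} (h : 2 ≤ Nat.card {x : α // p x}) :
    ∃ x, p x ∧ ∃ y, p y ∧ x ≠ y := by
  have h1 : 1 < Nat.card {x : α // p x} := h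
  rw [Finite.one_lt_card_iff_nontrivial] at h1
  obtain ⟨⟨x, hx⟩, ⟨y, hy⟩, hxy⟩ := h1
  exact ⟨x, hx, y, hy, fun h => hxy (by simpa using h)⟩

lemma natCard_le_of_subset {α : Type} [Fintype α] {p : α → Prop} (Y : Finset α)
    (h : ∀ x, p x → x ∈ Y) : Nat.card {x : α // p x} ≤ Y.card := by
  have heq : Nat.card {x : α // p x} = Set.ncard {x : α | p x} := Nat.card_coe_set_eq _
  rw [heq]
  calc Set.ncard {x : α | p x} ≤ Set.ncard (↑Y : Set α) :=
        Set.ncard_le_ncard (fun x hx => h x hx) Y.finite_toSet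
    _ = Y.card := Set.ncard_coe_finset Y

lemma compat4 {V : Type} (A : V → V → Prop) (X : Finset V) (M : V → V)
    (a b c d : V)
    (hab : InM X M a b) (hbc : NotM A X M b c) (hcd : InM X M c d)
    (hAab : A a b) (hAcd : A c d)
    (nodup : ([a,b,c,d] : List V).Nodup) :
    IsCompatPath A X M [a,b,c,d] ∧ 4 ≤ ([a,b,c,d] : List V).length := by
  refine ⟨⟨by simp, nodup, ?_, Or.inl ⟨hab, hbc, hcd, trivial⟩⟩, by simp⟩
  unfold List.Chain'
  rw [List.isChain_cons_cons, List.isChain_cons_cons, List.isChain_cons_cons]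
  exact ⟨hAab, hbc.1, hAcd, List.isChain_singleton d⟩

/-- a balanced bipartite digraph with classes of cardinality `a' ≥ 2`,
possessing a complete matching `M'` from `X'` to `Y'` and satisfying condition (A),
contains a vertex of `X'` of in-degree at least 2 or a vertex of `Y'` of out-degree at
least 2; consequently it contains an `M'`-compatible path of order at least 4. -/
theorem stmt15 {V : Type} [Fintype V] [DecidableEq V] (A : V → V → Prop)
    (X Y : Finset V) (a : ℕ) (ha : 2 ≤ a)
    (hbb : BalancedBipartite A X Y a)
    (M : V → V) (hmatch : CompleteMatching A X Y M)
    (hA : CondA A X Y M a) :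
    ((∃ x ∈ X, 2 ≤ indeg A x) ∨ (∃ y ∈ Y, 2 ≤ outdeg A y)) ∧
      ∃ p : List V, IsCompatPath A X M p ∧ 4 ≤ p.length := by
  obtain ⟨hX, hY, hdisj, hcover, harcs⟩ := hbb
  obtain ⟨hm1, hm2⟩ := hmatch
  have hdisj' : ∀ v, v ∈ X → v ∈ Y → False := fun v hv hv' =>
    Finset.disjoint_left.mp hdisj hv hv'
  -- M is a bijection from X onto Y
  have hsurj : ∀ u ∈ Y, ∃ x ∈ X, M x = u := by
    intro u hu
    have himg : X.image M ⊆ Y := by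
      intro w hw
      obtain ⟨x, hx, rfl⟩ := Finset.mem_image.mp hw
      exact (hm1 x hx).1
    have hcard : (X.image M).card = Y.card := by
      rw [Finset.card_image_of_injOn hm2, hX, hY]
    have : X.image M = Y := Finset.eq_of_subset_of_card_le himg (le_of_eq hcard.symm)
    rw [← this] at hu
    obtain ⟨x, hx, hxu⟩ := Finset.mem_image.mp hu
    exact ⟨x, hx, hxu⟩
  -- matching arcs give compatible paths
  have hpath : ∀ x ∈ X, IsCompatPathFromTo A X M [x, M x] x (M x) := by
    intro x hx
    have hMx : M x ∈ Y := (hm1 x hx).1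
    have hne : x ≠ M x := fun h => hdisj' x hx (h ▸ hMx)
    refine ⟨⟨by simp, by simp [hne], ?_, Or.inl ⟨⟨hx, rfl⟩, trivial⟩⟩, by simp, by simp⟩
    unfold List.Chain'
    rw [List.isChain_cons_cons]
    exact ⟨(hm1 x hx).2, List.isChain_singleton _⟩
  -- first conjunct
  have hkey : (∃ x ∈ X, 2 ≤ indeg A x) ∨ (∃ y ∈ Y, 2 ≤ outdeg A y) := by
    by_contra hcon
    push_neg at hcon
    obtain ⟨hin, hout⟩ := hcon
    -- degree bounds
    have hdegX : ∀ x ∈ X, deg A x ≤ a + 1 := by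
      intro x hx
      have h1 : outdeg A x ≤ a := by
        rw [← hY]
        exact natCard_le_of_subset Y (fun w hw => by
          rcases harcs x w hw with ⟨_, h⟩ | ⟨h, _⟩
          · exact h
          · exact absurd hx (fun hx' => hdisj' x hx' h))
      have h2 : indeg A x ≤ 1 := by
        have := hin x hx; omega
      unfold deg; omega
    have hdegY : ∀ y ∈ Y, deg A y ≤ a + 1 := by
      intro y hy
      have h1 : indeg A y ≤ a := by
        rw [← hX]
        exact natCard_le_of_subset X (fun w hw => by
          rcases harcs w y hw with ⟨h, _⟩ | ⟨_, h⟩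
          · exact h
          · exact absurd hy (fun hy' => hdisj' y h hy'))
      have h2 : outdeg A y ≤ 1 := by
        have := hout y hy; omega
      unfold deg; omega
    -- two distinct vertices of X
    obtain ⟨x1, hx1, x2, hx2, hx12⟩ := Finset.one_lt_card.mp (by omega : 1 < X.card)
    have hy12 : M x1 ≠ M x2 := fun h => hx12 (hm2 hx1 hx2 h)
    have := hA x1 x2 (M x1) (M x2) hx1 hx2 (hm1 x1 hx1).1 (hm1 x2 hx2).1 hx12 hy12
      ⟨_, hpath x1 hx1⟩ ⟨_, hpath x2 hx2⟩
    have b1 := hdegX x1 hx1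
    have b2 := hdegX x2 hx2
    have b3 := hdegY (M x1) (hm1 x1 hx1).1
    have b4 := hdegY (M x2) (hm1 x2 hx2).1
    omega
  refine ⟨hkey, ?_⟩
  rcases hkey with ⟨x, hx, hxin⟩ | ⟨y, hy, hyout⟩
  · -- x ∈ X with two in-neighbours; pick one ≠ M x
    obtain ⟨u, hu, w, hw, huw⟩ := two_le_natCard hxin
    have hinY : ∀ z, A z x → z ∈ Y := fun z hz => by
      rcases harcs z x hz with ⟨h, h'⟩ | ⟨h, _⟩
      · exact absurd hx (fun hx' => hdisj' x hx' h')
      · exact h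
    obtain ⟨u, hu, hune⟩ : ∃ u, A u x ∧ u ≠ M x := by
      by_cases h : u = M x
      · exact ⟨w, hw, fun hw' => huw (h.trans hw'.symm)⟩
      · exact ⟨u, hu, h⟩
    have huY : u ∈ Y := hinY u hu
    obtain ⟨x0, hx0, hx0u⟩ := hsurj u huY
    have hMxY : M x ∈ Y := (hm1 x hx).1
    have nodup : ([x0, u, x, M x] : List V).Nodup := by
      have h1 : x0 ≠ u := fun h => hdisj' x0 hx0 (h ▸ huY)
      have h2 : x0 ≠ x := fun h => hune (hx0u ▸ h ▸ rfl)
      have h3 : x0 ≠ M x := fun h => hdisj' x0 hx0 (h ▸ hMxY)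
      have h4 : u ≠ x := fun h => hdisj' u (h ▸ hx) huY
      have h6 : x ≠ M x := fun h => hdisj' x hx (h ▸ hMxY)
      simp [h1, h2, h3, h4, hune, h6]
    have := compat4 A X M x0 u x (M x) ⟨hx0, hx0u⟩
      ⟨hu, fun h => hdisj' u h.1 huY⟩ ⟨hx, rfl⟩
      (hx0u ▸ (hm1 x0 hx0).2) (hm1 x hx).2 nodup
    exact ⟨_, this⟩
  · -- y ∈ Y with two out-neighbours; pick one with M v ≠ y
    obtain ⟨u, hu, w, hw, huw⟩ := two_le_natCard hyout
    have houtX : ∀ z, A y z → z ∈ X := fun z hz => by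
      rcases harcs y z hz with ⟨h, _⟩ | ⟨_, h⟩
      · exact absurd hy (fun hy' => hdisj' y h hy')
      · exact h
    have huX := houtX u hu
    have hwX := houtX w hw
    obtain ⟨v, hv, hvX, hvne⟩ : ∃ v, A y v ∧ v ∈ X ∧ M v ≠ y := by
      by_cases h : M u = y
      · refine ⟨w, hw, hwX, fun h' => huw (hm2 huX hwX (h.trans h'.symm))⟩
      · exact ⟨u, hu, huX, h⟩
    obtain ⟨x0, hx0, hx0y⟩ := hsurj y hy
    have hMvY : M v ∈ Y := (hm1 v hvX).1
    have nodup : ([x0, y, v, M v] : List V).Nodup := by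
      have h1 : x0 ≠ y := fun h => hdisj' x0 hx0 (h ▸ hy)
      have h2 : x0 ≠ v := fun h => hvne (hx0y ▸ h ▸ rfl)
      have h3 : x0 ≠ M v := fun h => hdisj' x0 hx0 (h ▸ hMvY)
      have h4 : y ≠ v := fun h => hdisj' y (h ▸ hvX) hy
      have h5 : y ≠ M v := fun h => hvne h.symm
      have h6 : v ≠ M v := fun h => hdisj' v hvX (h ▸ hMvY)
      simp [h1, h2, h3, h4, h5, h6]
    have := compat4 A X M x0 y v (M v) ⟨hx0, hx0y⟩
      ⟨hv, fun h => hdisj' y h.1 hy⟩ ⟨hvX, rfl⟩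
      (hx0y ▸ (hm1 x0 hx0).2) (hm1 v hvX).2 nodup
    exact ⟨_, this⟩

end BipDigraph
end
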